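/- arXiv:2201.11195 — 11 statements merged into one kernel-verified Lean document; each statement's English description precedes it below -/
import Mathlib

section
/- Let C be a finite candidate set and let P be a preference profile over C. If P is T-consistent for some ordered binary tree T over C, then P is group-separable. -/
/-- An ordered binary tree: every internal node has a left and a right subtree,
and leaves are labeled with candidates. -/
inductive OBTree (C : Type*) : Type _ where
  | leaf : C → OBTree C
  | node : OBTree C → OBTree C → OBTree C

namespace OBTree

/-- The list of leaf labels of an ordered binary tree (in left-to-right order). -/
def leavesList {C : Type*} : OBTree C → List C
  | .leaf c => [c]
  | .node l r => leavesList l ++ leavesList r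

/-- A vote `v` (a strict linear order on candidates, `v a b` meaning `a` is ranked
above `b`) is consistent with the ordered binary tree `T`: for every internal node,
`v` ranks all candidates labeling leaves of the left subtree above all candidates
labeling leaves of the right subtree, or vice versa. -/
def VoteConsistent {C : Type*} (v : C → C → Prop) : OBTree C → Prop
  | .leaf _ => True
  | .node l r =>
      VoteConsistent v l ∧ VoteConsistent v r ∧
      ((∀ a ∈ l.leavesList, ∀ b ∈ r.leavesList, v a b) ∨
       (∀ a ∈ l.leavesList, ∀ b ∈ r.leavesList, v b a))

end OBTree

/-- A profile (list of votes, each vote a strict linear order given as the relation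
"ranked above") is group-separable: every set `A` of candidates with `|A| ≥ 2` has a
nonempty proper subset `B ⊊ A` such that every vote ranks all of `B` above all of
`A \ B`, or all of `A \ B` above all of `B`. -/
def GroupSeparable {C : Type*} [DecidableEq C] (P : List (C → C → Prop)) : Prop :=
  ∀ A : Finset C, 2 ≤ A.card →
    ∃ B : Finset C, B.Nonempty ∧ B ⊂ A ∧
      ∀ v ∈ P, (∀ b ∈ B, ∀ a ∈ A \ B, v b a) ∨ (∀ b ∈ B, ∀ a ∈ A \ B, v a b)

lemma obtree_aux {C : Type*} [DecidableEq C] (T : OBTree C) :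
    ∀ A : Finset C, (∀ a ∈ A, a ∈ T.leavesList) → 2 ≤ A.card →
    ∃ B : Finset C, B.Nonempty ∧ B ⊂ A ∧
      ∀ v : C → C → Prop, OBTree.VoteConsistent v T →
        ((∀ b ∈ B, ∀ a ∈ A \ B, v b a) ∨ (∀ b ∈ B, ∀ a ∈ A \ B, v a b)) := by
  induction T with
  | leaf c =>
    intro A hA h2
    exfalso
    have : A ⊆ {c} := by
      intro a ha
      have := hA a ha
      simp [OBTree.leavesList] at this
      simp [this]
    have := Finset.card_le_card this
    simp at this
    omega
  | node l r ihl ihr =>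
    intro A hA h2
    by_cases hl : ∀ a ∈ A, a ∈ l.leavesList
    · obtain ⟨B, h1, h2', h3⟩ := ihl A hl h2
      exact ⟨B, h1, h2', fun v hv => h3 v hv.1⟩
    · by_cases hr : ∀ a ∈ A, a ∈ r.leavesList
      · obtain ⟨B, h1, h2', h3⟩ := ihr A hr h2
        exact ⟨B, h1, h2', fun v hv => h3 v hv.2.1⟩
      · push_neg at hl hr
        obtain ⟨a₁, ha₁A, ha₁⟩ := hl
        obtain ⟨a₂, ha₂A, ha₂⟩ := hr
        classical
        refine ⟨A.filter (· ∈ l.leavesList), ?_, ?_, ?_⟩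
        · refine ⟨a₂, ?_⟩
          simp only [Finset.mem_filter]
          refine ⟨ha₂A, ?_⟩
          have := hA a₂ ha₂A
          simp [OBTree.leavesList] at this
          tauto
        · constructor
          · exact Finset.filter_subset _ _
          · intro hsub
            have := hsub ha₁A
            simp only [Finset.mem_filter] at this
            exact ha₁ this.2
        · intro v hv
          have hmemL : ∀ b ∈ A.filter (· ∈ l.leavesList), b ∈ l.leavesList := by
            intro b hb; simp only [Finset.mem_filter] at hb; exact hb.2
          have hmemR : ∀ a ∈ A \ A.filter (· ∈ l.leavesList), a ∈ r.leavesList := by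
            intro a ha
            simp only [Finset.mem_sdiff, Finset.mem_filter] at ha
            have := hA a ha.1
            simp only [OBTree.leavesList, List.mem_append] at this
            rcases this with h | h
            · exact absurd ⟨ha.1, h⟩ ha.2
            · exact h
          rcases hv.2.2 with h | h
          · exact Or.inl fun b hb a ha => h b (hmemL b hb) a (hmemR a ha)
          · exact Or.inr fun b hb a ha => h b (hmemL b hb) a (hmemR a ha)

/-- If a profile over a finite candidate set is `T`-consistent for some ordered
binary tree `T` whose leaves are labeled bijectively with the candidates, then the
profile is group-separable. -/
theorem tree_consistent_imp_groupSeparable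
    {C : Type*} [Fintype C] [DecidableEq C]
    (P : List (C → C → Prop))
    (hvotes : ∀ v ∈ P, IsStrictTotalOrder C v)
    (T : OBTree C)
    (hnodup : T.leavesList.Nodup)
    (hall : ∀ c : C, c ∈ T.leavesList)
    (hcons : ∀ v ∈ P, OBTree.VoteConsistent v T) :
    GroupSeparable P := by
  intro A h2
  obtain ⟨B, h1, hsub, h3⟩ := obtree_aux T A (fun a _ => hall a) h2
  exact ⟨B, h1, hsub, fun v hv => h3 v (hcons v hv)⟩
end

section
/- Let C be a finite nonempty candidate set and let P be a preference profile over C. If P is group-separable, then there exists an ordered binary tree T over C such that P is T-consistent. -/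
theorem aux_tree {C : Type*} [DecidableEq C]
    (P : List (C → C → Prop)) (hgs : GroupSeparable P) :
    ∀ A : Finset C, A.Nonempty →
      ∃ T : OBTree C, T.leavesList.Nodup ∧ (∀ c, c ∈ T.leavesList ↔ c ∈ A) ∧
        ∀ v ∈ P, OBTree.VoteConsistent v T := by
  intro A
  induction A using Finset.strongInduction with
  | _ A ih =>
    intro hA
    rcases Nat.lt_or_ge A.card 2 with h1 | h2
    · obtain ⟨c, hc⟩ := Finset.card_eq_one.mp (le_antisymm (by omega) hA.card_pos)
      refine ⟨.leaf c, by simp [OBTree.leavesList], ?_, fun v _ => trivial⟩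
      simp [OBTree.leavesList, hc]
    · obtain ⟨B, hBne, hBA, hcond⟩ := hgs A h2
      have hAB : (A \ B).Nonempty := by
        obtain ⟨x, hxA, hxB⟩ := Finset.exists_of_ssubset hBA
        exact ⟨x, Finset.mem_sdiff.mpr ⟨hxA, hxB⟩⟩
      obtain ⟨TL, hLnd, hLmem, hLcons⟩ := ih B hBA hBne
      have hABA : A \ B ⊂ A := Finset.sdiff_ssubset hBA.subset hBne
      obtain ⟨TR, hRnd, hRmem, hRcons⟩ := ih (A \ B) hABA hAB
      refine ⟨.node TL TR, ?_, ?_, ?_⟩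
      · simp only [OBTree.leavesList, List.nodup_append]
        refine ⟨hLnd, hRnd, fun a ha b hb hab => ?_⟩
        have h1 := (hLmem a).mp ha
        have hb' := (hRmem a).mp (hab ▸ hb)
        exact (Finset.mem_sdiff.mp hb').2 h1
      · intro c
        simp only [OBTree.leavesList, List.mem_append, hLmem, hRmem, Finset.mem_sdiff]
        constructor
        · rintro (h | ⟨h, _⟩)
          · exact hBA.subset h
          · exact h
        · intro hcA
          by_cases hcB : c ∈ B
          · exact Or.inl hcB
          · exact Or.inr ⟨hcA, hcB⟩
      · intro v hv
        refine ⟨hLcons v hv, hRcons v hv, ?_⟩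
        rcases hcond v hv with h | h
        · left; intro a ha b hb
          exact h a ((hLmem a).mp ha) b ((hRmem b).mp hb)
        · right; intro a ha b hb
          exact h a ((hLmem a).mp ha) b ((hRmem b).mp hb)

/-- If a profile over a finite nonempty candidate set is group-separable, then there
exists an ordered binary tree `T` whose leaves are labeled bijectively with the
candidates such that the profile is `T`-consistent. -/
theorem groupSeparable_imp_tree_consistent
    {C : Type*} [Fintype C] [DecidableEq C] [Nonempty C]
    (P : List (C → C → Prop))
    (hvotes : ∀ v ∈ P, IsStrictTotalOrder C v)
    (hgs : GroupSeparable P) :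
    ∃ T : OBTree C, T.leavesList.Nodup ∧ (∀ c : C, c ∈ T.leavesList) ∧
      ∀ v ∈ P, OBTree.VoteConsistent v T := by
  obtain ⟨T, hnd, hmem, hcons⟩ := aux_tree P hgs Finset.univ Finset.univ_nonempty
  exact ⟨T, hnd, fun c => (hmem c).mpr (Finset.mem_univ c), hcons⟩
end

section
/- Fix i ∈ {1,2,3}. Let P be a finite set of votes over a candidate set C, and suppose P is partitioned as P = U ∪ V (with U and V disjoint) where neither U nor V contains any i-minor. Then for every triple T = {a,b,c} ⊆ C of three distinct candidates such that the set P^i_{T,x} = {v ∈ P : x is ranked in the i-th position in the restriction of v to T} is nonempty for every x ∈ T, there is at most one candidate x ∈ T for which both U ∩ P^i_{T,x} ≠ ∅ and V ∩ P^i_{T,x} ≠ ∅ hold. -/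
/-- `PosOf i v x y z` says that candidate `x` is ranked in the `i`-th position
(for `i ∈ {1,2,3}`) in the restriction of the vote `v` (a strict linear order,
`v a b` meaning `a` is ranked above `b`) to the triple `{x, y, z}`. -/
def PosOf {C : Type*} (i : ℕ) (v : C → C → Prop) (x y z : C) : Prop :=
  match i with
  | 1 => v x y ∧ v x z
  | 2 => (v y x ∧ v x z) ∨ (v z x ∧ v x y)
  | 3 => v y x ∧ v z x
  | _ => False

/-- `InPosTriple i v a b c x` says that `x ∈ {a, b, c}` and `x` is ranked in the
`i`-th position in the restriction of the vote `v` to the triple `{a, b, c}`. -/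
def InPosTriple {C : Type*} (i : ℕ) (v : C → C → Prop) (a b c x : C) : Prop :=
  (x = a ∧ PosOf i v a b c) ∨ (x = b ∧ PosOf i v b a c) ∨ (x = c ∧ PosOf i v c a b)

/-- A set `W` of votes contains an `i`-minor: there are three distinct votes in `W`
and three distinct candidates such that each of the candidates appears in the `i`-th
position (in the restriction to the triple) of exactly one of the three votes. -/
def HasIMinor {C : Type*} (i : ℕ) (W : Set (C → C → Prop)) : Prop :=
  ∃ u ∈ W, ∃ v ∈ W, ∃ w ∈ W, u ≠ v ∧ u ≠ w ∧ v ≠ w ∧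
    ∃ a b c : C, a ≠ b ∧ a ≠ c ∧ b ≠ c ∧
      PosOf i u a b c ∧ PosOf i v b a c ∧ PosOf i w c a b

section Aux

variable {C : Type*}

lemma posof_symm (i : ℕ) (v : C → C → Prop) (x y z : C) :
    PosOf i v x y z ↔ PosOf i v x z y := by
  match i with
  | 0 => simp [PosOf]
  | 1 => simp [PosOf]; tauto
  | 2 => simp [PosOf]; tauto
  | 3 => simp [PosOf]; tauto
  | (n+4) => simp [PosOf]

lemma inpos_swap_ab (i : ℕ) (v : C → C → Prop) (a b c x : C) :
    InPosTriple i v a b c x ↔ InPosTriple i v b a c x := by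
  unfold InPosTriple
  rw [posof_symm i v c a b, posof_symm i v c b a]
  tauto

lemma inpos_swap_bc (i : ℕ) (v : C → C → Prop) (a b c x : C) :
    InPosTriple i v a b c x ↔ InPosTriple i v a c b x := by
  unfold InPosTriple
  rw [posof_symm i v a b c, posof_symm i v a c b]
  tauto

lemma posof_clash (i : ℕ) (hi : i = 1 ∨ i = 2 ∨ i = 3) (v : C → C → Prop)
    (hv : IsStrictTotalOrder C v) (p q r : C)
    (h1 : PosOf i v p q r) (h2 : PosOf i v q p r) : False := by
  have tr : ∀ x y z : C, v x y → v y z → v x z := fun x y z => hv.trans x y z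
  have asym : ∀ x y : C, v x y → v y x → False := fun x y h h' =>
    hv.irrefl x (tr x y x h h')
  rcases hi with rfl | rfl | rfl <;> simp only [PosOf] at h1 h2
  · exact asym p q h1.1 h2.1
  · rcases h1 with ⟨h1a, h1b⟩ | ⟨h1a, h1b⟩ <;> rcases h2 with ⟨h2a, h2b⟩ | ⟨h2a, h2b⟩
    · exact asym p q h2a h1a
    · exact asym p q (tr p r q h1b h2a) h1a
    · exact asym p q h1b (tr q r p h2b h1a)
    · exact asym p q h1b h2b
  · exact asym p q h2.1 h1.1

lemma inpos_unique (i : ℕ) (hi : i = 1 ∨ i = 2 ∨ i = 3) (v : C → C → Prop)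
    (hv : IsStrictTotalOrder C v) (a b c x y : C)
    (hab : a ≠ b) (hac : a ≠ c) (hbc : b ≠ c)
    (hx : InPosTriple i v a b c x) (hy : InPosTriple i v a b c y) : x = y := by
  rcases hx with ⟨rfl, hx⟩ | ⟨rfl, hx⟩ | ⟨rfl, hx⟩ <;>
    rcases hy with ⟨rfl, hy⟩ | ⟨rfl, hy⟩ | ⟨rfl, hy⟩ <;> try rfl
  all_goals exfalso
  all_goals first
    | exact posof_clash i hi v hv _ _ _ hx hy
    | exact posof_clash i hi v hv _ _ _ hx ((posof_symm ..).mp hy)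
    | exact posof_clash i hi v hv _ _ _ ((posof_symm ..).mp hx) hy
    | exact posof_clash i hi v hv _ _ _ ((posof_symm ..).mp hx) ((posof_symm ..).mp hy)

lemma inpos_first (i : ℕ) (v : C → C → Prop) (a b c : C)
    (hab : a ≠ b) (hac : a ≠ c) (h : InPosTriple i v a b c a) :
    PosOf i v a b c := by
  rcases h with ⟨_, h⟩ | ⟨h, _⟩ | ⟨h, _⟩
  · exact h
  · exact absurd h hab
  · exact absurd h hac

lemma inpos_perm (i : ℕ) (v : C → C → Prop) (a b c x : C)
    (h : InPosTriple i v a b c x) (a' b' c' : C)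
    (hp : (a' = a ∧ b' = b ∧ c' = c) ∨ (a' = a ∧ b' = c ∧ c' = b) ∨
          (a' = b ∧ b' = a ∧ c' = c) ∨ (a' = b ∧ b' = c ∧ c' = a) ∨
          (a' = c ∧ b' = a ∧ c' = b) ∨ (a' = c ∧ b' = b ∧ c' = a)) :
    InPosTriple i v a' b' c' x := by
  rcases hp with ⟨rfl, rfl, rfl⟩ | ⟨rfl, rfl, rfl⟩ | ⟨rfl, rfl, rfl⟩ |
    ⟨rfl, rfl, rfl⟩ | ⟨rfl, rfl, rfl⟩ | ⟨rfl, rfl, rfl⟩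
  · exact h
  · exact (inpos_swap_bc ..).mp h
  · exact (inpos_swap_ab ..).mp h
  · exact (inpos_swap_bc ..).mp ((inpos_swap_ab ..).mp h)
  · exact (inpos_swap_ab ..).mp ((inpos_swap_bc ..).mp h)
  · exact (inpos_swap_ab ..).mp ((inpos_swap_bc ..).mp ((inpos_swap_ab ..).mp h))

lemma build_minor (i : ℕ) (hi : i = 1 ∨ i = 2 ∨ i = 3) (W : Set (C → C → Prop))
    (hW : ¬ HasIMinor i W) (x y z : C) (hxy : x ≠ y) (hxz : x ≠ z) (hyz : y ≠ z)
    (p : C → C → Prop) (hp : p ∈ W) (hps : IsStrictTotalOrder C p)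
    (hpx : InPosTriple i p x y z x)
    (q : C → C → Prop) (hq : q ∈ W) (hqs : IsStrictTotalOrder C q)
    (hqy : InPosTriple i q x y z y)
    (r : C → C → Prop) (hr : r ∈ W) (hrs : IsStrictTotalOrder C r)
    (hrz : InPosTriple i r x y z z) : False := by
  have hpq : p ≠ q := by
    rintro rfl; exact hxy (inpos_unique i hi p hps x y z x y hxy hxz hyz hpx hqy)
  have hpr : p ≠ r := by
    rintro rfl; exact hxz (inpos_unique i hi p hps x y z x z hxy hxz hyz hpx hrz)
  have hqr : q ≠ r := by
    rintro rfl; exact hyz (inpos_unique i hi q hqs x y z y z hxy hxz hyz hqy hrz)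
  exact hW ⟨p, hp, q, hq, r, hr, hpq, hpr, hqr, x, y, z, hxy, hxz, hyz,
    inpos_first i p x y z hxy hxz hpx,
    inpos_first i q y x z (Ne.symm hxy) hyz
      (inpos_perm i q x y z y hqy y x z (Or.inr (Or.inr (Or.inl ⟨rfl, rfl, rfl⟩)))),
    inpos_first i r z x y (Ne.symm hxz) (Ne.symm hyz)
      (inpos_perm i r x y z z hrz z x y
        (Or.inr (Or.inr (Or.inr (Or.inr (Or.inl ⟨rfl, rfl, rfl⟩))))))⟩

lemma final_core (i : ℕ) (hi : i = 1 ∨ i = 2 ∨ i = 3) (U V : Set (C → C → Prop))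
    (hSTO : ∀ w ∈ U ∪ V, IsStrictTotalOrder C w)
    (hU : ¬ HasIMinor i U) (hV : ¬ HasIMinor i V)
    (x y z : C) (hxy : x ≠ y) (hxz : x ≠ z) (hyz : y ≠ z)
    (u : C → C → Prop) (hu : u ∈ U) (hux : InPosTriple i u x y z x)
    (v1 : C → C → Prop) (hv1 : v1 ∈ V) (hvx : InPosTriple i v1 x y z x)
    (u2 : C → C → Prop) (hu2 : u2 ∈ U) (huy : InPosTriple i u2 x y z y)
    (v2 : C → C → Prop) (hv2 : v2 ∈ V) (hvy : InPosTriple i v2 x y z y)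
    (w : C → C → Prop) (hw : w ∈ U ∪ V) (hwz : InPosTriple i w x y z z) :
    False := by
  rcases hw with hwU | hwV
  · exact build_minor i hi U hU x y z hxy hxz hyz
      u hu (hSTO u (Or.inl hu)) hux
      u2 hu2 (hSTO u2 (Or.inl hu2)) huy
      w hwU (hSTO w (Or.inl hwU)) hwz
  · exact build_minor i hi V hV x y z hxy hxz hyz
      v1 hv1 (hSTO v1 (Or.inr hv1)) hvx
      v2 hv2 (hSTO v2 (Or.inr hv2)) hvy
      w hwV (hSTO w (Or.inr hwV)) hwz

end Aux

/-- Fix `i ∈ {1,2,3}`. If a finite set of votes `P` is partitioned as `P = U ∪ V`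
with `U, V` disjoint and neither `U` nor `V` contains an `i`-minor, then for every
triple `{a, b, c}` of distinct candidates such that `P^i_{T,x} ≠ ∅` for every
`x ∈ {a, b, c}` (where `P^i_{T,x}` is the set of votes of `P` ranking `x` in the
`i`-th position within the triple), there is at most one `x ∈ {a, b, c}` such that
both `U ∩ P^i_{T,x} ≠ ∅` and `V ∩ P^i_{T,x} ≠ ∅`. -/
theorem at_most_one_split_candidate
    {C : Type*} (i : ℕ) (hi : i = 1 ∨ i = 2 ∨ i = 3)
    (P U V : Set (C → C → Prop)) (hfin : P.Finite)
    (hvotes : ∀ v ∈ P, IsStrictTotalOrder C v)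
    (hUV : U ∪ V = P) (hdisj : Disjoint U V)
    (hU : ¬ HasIMinor i U) (hV : ¬ HasIMinor i V)
    (a b c : C) (hab : a ≠ b) (hac : a ≠ c) (hbc : b ≠ c)
    (hdanger : ∀ x ∈ ({a, b, c} : Set C), ∃ v ∈ P, InPosTriple i v a b c x) :
    ∀ x ∈ ({a, b, c} : Set C), ∀ y ∈ ({a, b, c} : Set C),
      ((∃ u ∈ U, InPosTriple i u a b c x) ∧ (∃ v ∈ V, InPosTriple i v a b c x)) →
      ((∃ u ∈ U, InPosTriple i u a b c y) ∧ (∃ v ∈ V, InPosTriple i v a b c y)) →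
      x = y := by
  rintro x hx y hy ⟨⟨u, hu, hux⟩, ⟨v1, hv1, hvx⟩⟩ ⟨⟨u2, hu2, huy⟩, ⟨v2, hv2, hvy⟩⟩
  by_contra hxy
  have hSTO : ∀ w ∈ U ∪ V, IsStrictTotalOrder C w := by rw [hUV]; exact hvotes
  simp only [Set.mem_insert_iff, Set.mem_singleton_iff] at hx hy
  -- permutation disjunct abbreviations
  have d1 : ∀ p q r : C, (p = p ∧ q = q ∧ r = r) ∨ (p = p ∧ q = r ∧ r = q) ∨
      (p = q ∧ q = p ∧ r = r) ∨ (p = q ∧ q = r ∧ r = p) ∨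
      (p = r ∧ q = p ∧ r = q) ∨ (p = r ∧ q = q ∧ r = p) :=
    fun p q r => Or.inl ⟨rfl, rfl, rfl⟩
  rcases hx with h | h | h <;> rcases hy with h' | h' | h' <;>
    rw [h] at hux hvx hxy <;> rw [h'] at huy hvy hxy
  · exact hxy rfl
  · -- x = a, y = b, z = c
    obtain ⟨w, hwP, hwz⟩ := hdanger c (by simp)
    have hw : w ∈ U ∪ V := by rw [hUV]; exact hwP
    exact final_core i hi U V hSTO hU hV a b c hab hac hbc
      u hu (inpos_perm i u a b c a hux a b c (Or.inl ⟨rfl, rfl, rfl⟩))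
      v1 hv1 (inpos_perm i v1 a b c a hvx a b c (Or.inl ⟨rfl, rfl, rfl⟩))
      u2 hu2 (inpos_perm i u2 a b c b huy a b c (Or.inl ⟨rfl, rfl, rfl⟩))
      v2 hv2 (inpos_perm i v2 a b c b hvy a b c (Or.inl ⟨rfl, rfl, rfl⟩))
      w hw (inpos_perm i w a b c c hwz a b c (Or.inl ⟨rfl, rfl, rfl⟩))
  · -- x = a, y = c, z = b
    obtain ⟨w, hwP, hwz⟩ := hdanger b (by simp)
    have hw : w ∈ U ∪ V := by rw [hUV]; exact hwP
    exact final_core i hi U V hSTO hU hV a c b hac hab (Ne.symm hbc)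
      u hu (inpos_perm i u a b c a hux a c b (Or.inr (Or.inl ⟨rfl, rfl, rfl⟩)))
      v1 hv1 (inpos_perm i v1 a b c a hvx a c b (Or.inr (Or.inl ⟨rfl, rfl, rfl⟩)))
      u2 hu2 (inpos_perm i u2 a b c c huy a c b (Or.inr (Or.inl ⟨rfl, rfl, rfl⟩)))
      v2 hv2 (inpos_perm i v2 a b c c hvy a c b (Or.inr (Or.inl ⟨rfl, rfl, rfl⟩)))
      w hw (inpos_perm i w a b c b hwz a c b (Or.inr (Or.inl ⟨rfl, rfl, rfl⟩)))
  · -- x = b, y = a, z = c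
    obtain ⟨w, hwP, hwz⟩ := hdanger c (by simp)
    have hw : w ∈ U ∪ V := by rw [hUV]; exact hwP
    exact final_core i hi U V hSTO hU hV b a c (Ne.symm hab) hbc hac
      u hu (inpos_perm i u a b c b hux b a c (Or.inr (Or.inr (Or.inl ⟨rfl, rfl, rfl⟩))))
      v1 hv1 (inpos_perm i v1 a b c b hvx b a c (Or.inr (Or.inr (Or.inl ⟨rfl, rfl, rfl⟩))))
      u2 hu2 (inpos_perm i u2 a b c a huy b a c (Or.inr (Or.inr (Or.inl ⟨rfl, rfl, rfl⟩))))
      v2 hv2 (inpos_perm i v2 a b c a hvy b a c (Or.inr (Or.inr (Or.inl ⟨rfl, rfl, rfl⟩))))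
      w hw (inpos_perm i w a b c c hwz b a c (Or.inr (Or.inr (Or.inl ⟨rfl, rfl, rfl⟩))))
  · exact hxy rfl
  · -- x = b, y = c, z = a
    obtain ⟨w, hwP, hwz⟩ := hdanger a (by simp)
    have hw : w ∈ U ∪ V := by rw [hUV]; exact hwP
    exact final_core i hi U V hSTO hU hV b c a hbc (Ne.symm hab) (Ne.symm hac)
      u hu (inpos_perm i u a b c b hux b c a
        (Or.inr (Or.inr (Or.inr (Or.inl ⟨rfl, rfl, rfl⟩)))))
      v1 hv1 (inpos_perm i v1 a b c b hvx b c a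
        (Or.inr (Or.inr (Or.inr (Or.inl ⟨rfl, rfl, rfl⟩)))))
      u2 hu2 (inpos_perm i u2 a b c c huy b c a
        (Or.inr (Or.inr (Or.inr (Or.inl ⟨rfl, rfl, rfl⟩)))))
      v2 hv2 (inpos_perm i v2 a b c c hvy b c a
        (Or.inr (Or.inr (Or.inr (Or.inl ⟨rfl, rfl, rfl⟩)))))
      w hw (inpos_perm i w a b c a hwz b c a
        (Or.inr (Or.inr (Or.inr (Or.inl ⟨rfl, rfl, rfl⟩)))))
  · -- x = c, y = a, z = b
    obtain ⟨w, hwP, hwz⟩ := hdanger b (by simp)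
    have hw : w ∈ U ∪ V := by rw [hUV]; exact hwP
    exact final_core i hi U V hSTO hU hV c a b (Ne.symm hac) (Ne.symm hbc) hab
      u hu (inpos_perm i u a b c c hux c a b
        (Or.inr (Or.inr (Or.inr (Or.inr (Or.inl ⟨rfl, rfl, rfl⟩))))))
      v1 hv1 (inpos_perm i v1 a b c c hvx c a b
        (Or.inr (Or.inr (Or.inr (Or.inr (Or.inl ⟨rfl, rfl, rfl⟩))))))
      u2 hu2 (inpos_perm i u2 a b c a huy c a b
        (Or.inr (Or.inr (Or.inr (Or.inr (Or.inl ⟨rfl, rfl, rfl⟩))))))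
      v2 hv2 (inpos_perm i v2 a b c a hvy c a b
        (Or.inr (Or.inr (Or.inr (Or.inr (Or.inl ⟨rfl, rfl, rfl⟩))))))
      w hw (inpos_perm i w a b c b hwz c a b
        (Or.inr (Or.inr (Or.inr (Or.inr (Or.inl ⟨rfl, rfl, rfl⟩))))))
  · -- x = c, y = b, z = a
    obtain ⟨w, hwP, hwz⟩ := hdanger a (by simp)
    have hw : w ∈ U ∪ V := by rw [hUV]; exact hwP
    exact final_core i hi U V hSTO hU hV c b a (Ne.symm hbc) (Ne.symm hac) (Ne.symm hab)
      u hu (inpos_perm i u a b c c hux c b a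
        (Or.inr (Or.inr (Or.inr (Or.inr (Or.inr ⟨rfl, rfl, rfl⟩))))))
      v1 hv1 (inpos_perm i v1 a b c c hvx c b a
        (Or.inr (Or.inr (Or.inr (Or.inr (Or.inr ⟨rfl, rfl, rfl⟩))))))
      u2 hu2 (inpos_perm i u2 a b c b huy c b a
        (Or.inr (Or.inr (Or.inr (Or.inr (Or.inr ⟨rfl, rfl, rfl⟩))))))
      v2 hv2 (inpos_perm i v2 a b c b hvy c b a
        (Or.inr (Or.inr (Or.inr (Or.inr (Or.inr ⟨rfl, rfl, rfl⟩))))))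
      w hw (inpos_perm i w a b c a hwz c b a
        (Or.inr (Or.inr (Or.inr (Or.inr (Or.inr ⟨rfl, rfl, rfl⟩))))))
  · exact hxy rfl
end

section
/- Let C = {c₁,…,c_m} be a finite candidate set with a fixed enumeration and let P be a preference profile over C. Then P is group-separable on the caterpillar (c₁,…,c_m) if and only if for every vote v in P there exists a subset C' ⊆ C such that v ranks all candidates of C' above all candidates of C∖C', v ranks the candidates of C' in increasing order of their indices, and v ranks the candidates of C∖C' in decreasing order of their indices. -/
/-- A profile (list of votes, each a strict linear order with `v a b` meaning `a`
is ranked above `b`) over a linearly ordered candidate set is group-separable on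
the caterpillar given by the order (the enumeration `c₁, …, c_m` in increasing
order): every vote ranks each candidate `cᵢ` above all later candidates, or below
all later candidates. -/
def GSCaterpillar {C : Type*} [LT C] (P : List (C → C → Prop)) : Prop :=
  ∀ v ∈ P, ∀ i : C, (∀ j : C, i < j → v i j) ∨ (∀ j : C, i < j → v j i)

/-- A profile over the candidate set `{c₁, …, c_m}` (identified with `Fin m` via the
fixed enumeration) is group-separable on the caterpillar `(c₁, …, c_m)` if and only
if every vote `v` has a set of candidates `A` such that `v` ranks all of `A` above
all of its complement, ranks the candidates of `A` in increasing order of indices,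
and ranks the candidates outside `A` in decreasing order of indices. -/
theorem gsCaterpillar_iff_updown
    {m : ℕ} (P : List (Fin m → Fin m → Prop))
    (hvotes : ∀ v ∈ P, IsStrictTotalOrder (Fin m) v) :
    GSCaterpillar P ↔
      ∀ v ∈ P, ∃ A : Set (Fin m),
        (∀ x ∈ A, ∀ y ∉ A, v x y) ∧
        (∀ x ∈ A, ∀ y ∈ A, x < y → v x y) ∧
        (∀ x ∉ A, ∀ y ∉ A, x < y → v y x) := by
  constructor
  · intro hGS v hv
    refine ⟨{i | ∀ j, i < j → v i j}, ?_, ?_, ?_⟩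
    · intro x hx y hy
      rcases lt_trichotomy x y with h | h | h
      · exact hx y h
      · exact absurd (h ▸ hx) hy
      · have := (hGS v hv y).resolve_left hy
        exact this x h
    · intro x hx y _ h
      exact hx y h
    · intro x hx y _ h
      exact (hGS v hv x).resolve_left hx y h
  · intro h v hv i
    obtain ⟨A, hAB, hA, hB⟩ := h v hv
    by_cases hiA : i ∈ A
    · left
      intro j hij
      by_cases hjA : j ∈ A
      · exact hA i hiA j hjA hij
      · exact hAB i hiA j hjA
    · right
      intro j hij
      by_cases hjA : j ∈ A
      · exact hAB j hjA i hiA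
      · exact hB i hiA j hjA hij
end

section
/- A preference profile P over a finite candidate set C is caterpillar group-separable if and only if (1) P is medium-restricted (contains no 2-minor), and (2) P contains no 2×4 minor consisting of two votes u, v and four distinct candidates a, b, c, d such that, in the restrictions to {a,b,c,d}, u ranks a first and d last while v ranks b first and c last. -/
/-- A profile (list of votes, each a strict linear order with `v a b` meaning `a`
is ranked above `b`) over a finite candidate set `C` is caterpillar group-separable:
there is an enumeration of `C` (equivalently, a strict total order `lt` on `C`) such
that every vote ranks each candidate above all later candidates (w.r.t. `lt`) or
below all later candidates. -/
def CatGS {C : Type*} (P : List (C → C → Prop)) : Prop :=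
  ∃ lt : C → C → Prop, IsStrictTotalOrder C lt ∧
    ∀ v ∈ P, ∀ x : C, (∀ y : C, lt x y → v x y) ∨ (∀ y : C, lt x y → v y x)

/-- `x` is ranked in the middle position of the triple `{x, y, z}` by the vote `v`. -/
def MiddleOf {C : Type*} (v : C → C → Prop) (x y z : C) : Prop :=
  (v y x ∧ v x z) ∨ (v z x ∧ v x y)

/-- The profile `P` contains a 2-minor: three votes and three distinct candidates
such that each candidate is ranked in the middle position (of the restriction to the
triple) by exactly one of the three votes. -/
def Has2Minor {C : Type*} (P : List (C → C → Prop)) : Prop :=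
  ∃ u ∈ P, ∃ v ∈ P, ∃ w ∈ P, ∃ a b c : C, a ≠ b ∧ a ≠ c ∧ b ≠ c ∧
    MiddleOf u a b c ∧ MiddleOf v b a c ∧ MiddleOf w c a b

/-- The profile `P` contains a 2×4 minor of the forbidden form for caterpillar
group-separability: two votes `u, v` and four distinct candidates `a, b, c, d` such
that, in the restrictions to `{a, b, c, d}`, `u` ranks `a` first and `d` last while
`v` ranks `b` first and `c` last. -/
def HasCat24Minor {C : Type*} (P : List (C → C → Prop)) : Prop :=
  ∃ u ∈ P, ∃ v ∈ P, ∃ a b c d : C,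
    a ≠ b ∧ a ≠ c ∧ a ≠ d ∧ b ≠ c ∧ b ≠ d ∧ c ≠ d ∧
    (u a b ∧ u a c ∧ u a d ∧ u b d ∧ u c d) ∧
    (v b a ∧ v b c ∧ v b d ∧ v a c ∧ v d c)

section Aux

variable {C : Type*}

/-- `x` is extreme (first or last overall) in the vote `v`. -/
def ExtremeIn (v : C → C → Prop) (x : C) : Prop :=
  (∀ y, y ≠ x → v x y) ∨ (∀ y, y ≠ x → v y x)

lemma exists_top [Fintype C] [Nonempty C] (v : C → C → Prop) (h : IsStrictTotalOrder C v) :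
    ∃ t : C, ∀ y, y ≠ t → v t y := by
  haveI := h
  obtain ⟨m, -, hm⟩ := (Finite.wellFounded_of_trans_of_irrefl v).has_min Set.univ
    ⟨Classical.arbitrary C, trivial⟩
  refine ⟨m, fun y hy => ?_⟩
  rcases trichotomous_of v m y with h1 | h1 | h1
  · exact h1
  · exact absurd h1.symm hy
  · exact absurd h1 (hm y trivial)

lemma exists_bot [Fintype C] [Nonempty C] (v : C → C → Prop) (h : IsStrictTotalOrder C v) :
    ∃ t : C, ∀ y, y ≠ t → v y t := by
  haveI := h
  haveI : IsTrans C (flip v) := ⟨fun a b c h1 h2 => trans_of v h2 h1⟩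
  haveI : IsIrrefl C (flip v) := ⟨fun a => irrefl_of v a⟩
  obtain ⟨m, -, hm⟩ := (Finite.wellFounded_of_trans_of_irrefl (flip v)).has_min Set.univ
    ⟨Classical.arbitrary C, trivial⟩
  refine ⟨m, fun y hy => ?_⟩
  rcases trichotomous_of v y m with h1 | h1 | h1
  · exact h1
  · exact absurd h1 hy
  · exact absurd h1 (hm y trivial)

lemma middle_of_not_extreme (v : C → C → Prop) (h : IsStrictTotalOrder C v) (x : C)
    (hne : ¬ ExtremeIn v x) : ∃ b c, v b x ∧ v x c := by
  haveI := h
  rw [ExtremeIn] at hne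
  push_neg at hne
  obtain ⟨⟨y, hy1, hy2⟩, ⟨z, hz1, hz2⟩⟩ := hne
  refine ⟨y, z, ?_, ?_⟩
  · rcases trichotomous_of v y x with h1 | h1 | h1
    · exact h1
    · exact absurd h1 hy1
    · exact absurd h1 hy2
  · rcases trichotomous_of v x z with h1 | h1 | h1
    · exact h1
    · exact absurd h1.symm hz1
    · exact absurd h1 hz2

lemma exists_extreme [Fintype C] [Nonempty C] (P : List (C → C → Prop))
    (hv : ∀ v ∈ P, IsStrictTotalOrder C v)
    (h2 : ¬ Has2Minor P) (h24 : ¬ HasCat24Minor P) :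
    ∃ x : C, ∀ v ∈ P, ExtremeIn v x := by
  cases P with
  | nil => exact ⟨Classical.arbitrary C, fun v hvm => absurd hvm (List.not_mem_nil (a := v))⟩
  | cons u P' =>
    have huP : u ∈ u :: P' := List.mem_cons_self (a := u) (l := P')
    have hu := hv u huP
    haveI := hu
    obtain ⟨a, ha⟩ := exists_top u hu
    obtain ⟨d, hd⟩ := exists_bot u hu
    by_cases had : a = d
    · subst had
      refine ⟨a, fun v hvm => Or.inl fun y hy => ?_⟩
      exact absurd (trans_of u (ha y hy) (hd y hy)) (irrefl_of u a)
    · by_contra hcon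
      push_neg at hcon
      obtain ⟨v, hvP, hva⟩ := hcon a
      obtain ⟨w, hwP, hwd⟩ := hcon d
      have hvS := hv v hvP
      have hwS := hv w hwP
      haveI := hvS
      haveI := hwS
      have samevote : ∀ g ∈ u :: P', IsStrictTotalOrder C g →
          ¬ ExtremeIn g a → ¬ ExtremeIn g d → False := by
        intro g hgP hgS hga hgd
        obtain ⟨b, hb⟩ := exists_top g hgS
        obtain ⟨c, hc⟩ := exists_bot g hgS
        have hba : b ≠ a := fun h => hga (h ▸ Or.inl hb)
        have hbd : b ≠ d := fun h => hgd (h ▸ Or.inl hb)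
        have hca : c ≠ a := fun h => hga (h ▸ Or.inr hc)
        have hcd : c ≠ d := fun h => hgd (h ▸ Or.inr hc)
        have hbc : b ≠ c := by
          intro h
          subst h
          exact absurd (trans_of g (hb a (Ne.symm hba)) (hc a (Ne.symm hca))) (irrefl_of g b)
        exact h24 ⟨u, huP, g, hgP, a, b, c, d,
          Ne.symm hba, Ne.symm hca, had, hbc, hbd, hcd,
          ⟨ha b hba, ha c hca, ha d (Ne.symm had), hd b hbd, hd c hcd⟩,
          ⟨hb a (Ne.symm hba), hb c (Ne.symm hbc), hb d (Ne.symm hbd),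
           hc a (Ne.symm hca), hc d (Ne.symm hcd)⟩⟩
      by_cases hvd : ExtremeIn v d
      · by_cases hwa : ExtremeIn w a
        · obtain ⟨b0, x0, hb0, hx0⟩ := middle_of_not_extreme v hvS a hva
          obtain ⟨p0, q0, hp0, hq0⟩ := middle_of_not_extreme w hwS d hwd
          rcases hvd with hvdt | hvdb <;> rcases hwa with hwat | hwab
          · -- d top of v, a top of w
            have hxa : x0 ≠ a := fun h => irrefl_of v a (h ▸ hx0)
            have hxd : x0 ≠ d :=
              fun h => irrefl_of v a (trans_of v (h ▸ hx0) (hvdt a had))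
            have hya : q0 ≠ a :=
              fun h => irrefl_of w d (trans_of w (h ▸ hq0) (hwat d (Ne.symm had)))
            have hyd : q0 ≠ d := fun h => irrefl_of w d (h ▸ hq0)
            rcases trichotomous_of v a q0 with hvy | hvy | hvy
            · exact h2 ⟨u, huP, v, hvP, w, hwP, q0, a, d, hya, hyd, had,
                Or.inl ⟨ha q0 hya, hd q0 hyd⟩,
                Or.inr ⟨hvdt a had, hvy⟩,
                Or.inr ⟨hwat d (Ne.symm had), hq0⟩⟩
            · exact absurd hvy.symm hya
            · rcases trichotomous_of w d x0 with hwx | hwx | hwx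
              · exact h2 ⟨u, huP, v, hvP, w, hwP, x0, a, d, hxa, hxd, had,
                  Or.inl ⟨ha x0 hxa, hd x0 hxd⟩,
                  Or.inr ⟨hvdt a had, hx0⟩,
                  Or.inr ⟨hwat d (Ne.symm had), hwx⟩⟩
              · exact absurd hwx.symm hxd
              · have hxy : x0 ≠ q0 :=
                  fun h => irrefl_of v q0 (trans_of v hvy (h ▸ hx0))
                exact h24 ⟨v, hvP, w, hwP, d, a, q0, x0,
                  Ne.symm had, Ne.symm hyd, Ne.symm hxd, Ne.symm hya, Ne.symm hxa, Ne.symm hxy,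
                  ⟨hvdt a had, hvdt q0 hyd, hvdt x0 hxd, hx0, trans_of v hvy hx0⟩,
                  ⟨hwat d (Ne.symm had), hwat q0 hya, hwat x0 hxa,
                   hq0, trans_of w hwx hq0⟩⟩
          · -- d top of v, a bottom of w
            have hxa : x0 ≠ a := fun h => irrefl_of v a (h ▸ hx0)
            have hxd : x0 ≠ d :=
              fun h => irrefl_of v a (trans_of v (h ▸ hx0) (hvdt a had))
            have hya : p0 ≠ a :=
              fun h => irrefl_of w d (trans_of w (hwab d (Ne.symm had)) (h ▸ hp0))
            have hyd : p0 ≠ d := fun h => irrefl_of w d (h ▸ hp0)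
            rcases trichotomous_of v a p0 with hvy | hvy | hvy
            · exact h2 ⟨u, huP, v, hvP, w, hwP, p0, a, d, hya, hyd, had,
                Or.inl ⟨ha p0 hya, hd p0 hyd⟩,
                Or.inr ⟨hvdt a had, hvy⟩,
                Or.inl ⟨hp0, hwab d (Ne.symm had)⟩⟩
            · exact absurd hvy.symm hya
            · rcases trichotomous_of w x0 d with hwx | hwx | hwx
              · exact h2 ⟨u, huP, v, hvP, w, hwP, x0, a, d, hxa, hxd, had,
                  Or.inl ⟨ha x0 hxa, hd x0 hxd⟩,
                  Or.inr ⟨hvdt a had, hx0⟩,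
                  Or.inl ⟨hwx, hwab d (Ne.symm had)⟩⟩
              · exact absurd hwx hxd
              · have hxy : p0 ≠ x0 :=
                  fun h => irrefl_of v x0 (trans_of v (h ▸ hvy) hx0)
                exact h24 ⟨v, hvP, w, hwP, d, p0, a, x0,
                  Ne.symm hyd, Ne.symm had, Ne.symm hxd, hya, hxy, Ne.symm hxa,
                  ⟨hvdt p0 hyd, hvdt a had, hvdt x0 hxd, trans_of v hvy hx0, hx0⟩,
                  ⟨hp0, hwab p0 hya, trans_of w hp0 hwx,
                   hwab d (Ne.symm had), hwab x0 hxa⟩⟩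
          · -- d bottom of v, a top of w
            have hxa : b0 ≠ a := fun h => irrefl_of v a (h ▸ hb0)
            have hxd : b0 ≠ d :=
              fun h => irrefl_of v d (trans_of v (h ▸ hb0) (hvdb a had))
            have hya : q0 ≠ a :=
              fun h => irrefl_of w d (trans_of w (h ▸ hq0) (hwat d (Ne.symm had)))
            have hyd : q0 ≠ d := fun h => irrefl_of w d (h ▸ hq0)
            rcases trichotomous_of v q0 a with hvy | hvy | hvy
            · exact h2 ⟨u, huP, v, hvP, w, hwP, q0, a, d, hya, hyd, had,
                Or.inl ⟨ha q0 hya, hd q0 hyd⟩,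
                Or.inl ⟨hvy, hvdb a had⟩,
                Or.inr ⟨hwat d (Ne.symm had), hq0⟩⟩
            · exact absurd hvy hya
            · rcases trichotomous_of w d b0 with hwx | hwx | hwx
              · exact h2 ⟨u, huP, v, hvP, w, hwP, b0, a, d, hxa, hxd, had,
                  Or.inl ⟨ha b0 hxa, hd b0 hxd⟩,
                  Or.inl ⟨hb0, hvdb a had⟩,
                  Or.inr ⟨hwat d (Ne.symm had), hwx⟩⟩
              · exact absurd hwx.symm hxd
              · have hxy : b0 ≠ q0 :=
                  fun h => irrefl_of v q0 (trans_of v (h ▸ hb0) hvy)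
                exact h24 ⟨v, hvP, w, hwP, b0, a, q0, d,
                  hxa, hxy, hxd, Ne.symm hya, had, hyd,
                  ⟨hb0, trans_of v hb0 hvy, hvdb b0 hxd, hvdb a had, hvdb q0 hyd⟩,
                  ⟨hwat b0 hxa, hwat q0 hya, hwat d (Ne.symm had),
                   trans_of w hwx hq0, hq0⟩⟩
          · -- d bottom of v, a bottom of w
            have hxa : b0 ≠ a := fun h => irrefl_of v a (h ▸ hb0)
            have hxd : b0 ≠ d :=
              fun h => irrefl_of v d (trans_of v (h ▸ hb0) (hvdb a had))
            have hya : p0 ≠ a :=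
              fun h => irrefl_of w d (trans_of w (hwab d (Ne.symm had)) (h ▸ hp0))
            have hyd : p0 ≠ d := fun h => irrefl_of w d (h ▸ hp0)
            rcases trichotomous_of v p0 a with hvy | hvy | hvy
            · exact h2 ⟨u, huP, v, hvP, w, hwP, p0, a, d, hya, hyd, had,
                Or.inl ⟨ha p0 hya, hd p0 hyd⟩,
                Or.inl ⟨hvy, hvdb a had⟩,
                Or.inl ⟨hp0, hwab d (Ne.symm had)⟩⟩
            · exact absurd hvy hya
            · rcases trichotomous_of w b0 d with hwx | hwx | hwx
              · exact h2 ⟨u, huP, v, hvP, w, hwP, b0, a, d, hxa, hxd, had,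
                  Or.inl ⟨ha b0 hxa, hd b0 hxd⟩,
                  Or.inl ⟨hb0, hvdb a had⟩,
                  Or.inl ⟨hwx, hwab d (Ne.symm had)⟩⟩
              · exact absurd hwx hxd
              · have hxy : b0 ≠ p0 :=
                  fun h => irrefl_of v p0 (trans_of v (h ▸ hb0) hvy)
                exact h24 ⟨v, hvP, w, hwP, b0, p0, a, d,
                  hxy, hxa, hxd, hya, hyd, had,
                  ⟨trans_of v hb0 hvy, hb0, hvdb b0 hxd, hvdb p0 hyd, hvdb a had⟩,
                  ⟨trans_of w hp0 hwx, hwab p0 hya, hp0, hwab b0 hxa,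
                   hwab d (Ne.symm had)⟩⟩
        · exact samevote w hwP hwS hwa hwd
      · exact samevote v hvP hvS hva hvd

end Aux

section Build

lemma catGS_of_isEmpty {C : Type*} [IsEmpty C] (P : List (C → C → Prop)) : CatGS P :=
  ⟨fun _ _ => False,
   { trichotomous := fun a => isEmptyElim a,
     irrefl := fun a => isEmptyElim a,
     trans := fun a => isEmptyElim a },
   fun _ _ x => isEmptyElim x⟩

universe u

lemma catGS_of_le : ∀ (n : ℕ) (C : Type u) [Fintype C], Fintype.card C ≤ n →
    ∀ (P : List (C → C → Prop)), (∀ v ∈ P, IsStrictTotalOrder C v) →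
    ¬ Has2Minor P → ¬ HasCat24Minor P → CatGS P := by
  intro n
  induction n with
  | zero =>
    intro C _ hc P hv h2 h24
    haveI : IsEmpty C := Fintype.card_eq_zero_iff.mp (Nat.le_zero.mp hc)
    exact catGS_of_isEmpty P
  | succ n ih =>
    intro C _ hc P hv h2 h24
    cases isEmpty_or_nonempty C with
    | inl h => exact catGS_of_isEmpty P
    | inr h =>
      classical
      obtain ⟨x, hx⟩ := exists_extreme P hv h2 h24
      let C' := {y : C // y ≠ x}
      let res : (C → C → Prop) → (C' → C' → Prop) := fun v p q => v p.1 q.1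
      let P' : List (C' → C' → Prop) := P.map res
      have hcard : Fintype.card C' ≤ n := by
        have h1 : Fintype.card C' < Fintype.card C :=
          Fintype.card_subtype_lt (p := fun y => y ≠ x) (x := x) (by simp)
        omega
      have hv' : ∀ v' ∈ P', IsStrictTotalOrder C' v' := by
        intro v' hmem
        obtain ⟨v, hvm, rfl⟩ := List.mem_map.mp hmem
        haveI := hv v hvm
        exact
          { trichotomous := fun p q hpq hqp => by
              rcases trichotomous_of v p.1 q.1 with h1 | h1 | h1
              · exact absurd h1 hpq
              · exact Subtype.ext h1
              · exact absurd h1 hqp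
            irrefl := fun p => irrefl_of v p.1
            trans := fun p q r h1 h2 => trans_of v h1 h2 }
      have h2' : ¬ Has2Minor P' := by
        intro hh
        obtain ⟨u', hu', v', hv'2, w', hw', a, b, c, hab, hac, hbc, m1, m2, m3⟩ := hh
        obtain ⟨uu, hum, rfl⟩ := List.mem_map.mp hu'
        obtain ⟨vv, hvm, rfl⟩ := List.mem_map.mp hv'2
        obtain ⟨ww, hwm, rfl⟩ := List.mem_map.mp hw'
        exact h2 ⟨uu, hum, vv, hvm, ww, hwm, a.1, b.1, c.1,
          fun hh' => hab (Subtype.ext hh'), fun hh' => hac (Subtype.ext hh'),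
          fun hh' => hbc (Subtype.ext hh'), m1, m2, m3⟩
      have h24' : ¬ HasCat24Minor P' := by
        intro hh
        obtain ⟨u', hu', v', hv'2, a, b, c, d, hab, hac, had, hbc, hbd, hcd, hu1, hv1⟩ := hh
        obtain ⟨uu, hum, rfl⟩ := List.mem_map.mp hu'
        obtain ⟨vv, hvm, rfl⟩ := List.mem_map.mp hv'2
        exact h24 ⟨uu, hum, vv, hvm, a.1, b.1, c.1, d.1,
          fun hh' => hab (Subtype.ext hh'), fun hh' => hac (Subtype.ext hh'),
          fun hh' => had (Subtype.ext hh'), fun hh' => hbc (Subtype.ext hh'),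
          fun hh' => hbd (Subtype.ext hh'), fun hh' => hcd (Subtype.ext hh'),
          hu1, hv1⟩
      obtain ⟨lt', hsto', hprop'⟩ := ih C' hcard P' hv' h2' h24'
      haveI := hsto'
      refine ⟨fun p q => (p = x ∧ q ≠ x) ∨ ∃ (hp : p ≠ x) (hq : q ≠ x), lt' ⟨p, hp⟩ ⟨q, hq⟩,
        ?_, ?_⟩
      · exact
          { trichotomous := fun p q hpq hqp => by
              by_cases hp : p = x
              · by_cases hq : q = x
                · exact hp.trans hq.symm
                · exact (hpq (Or.inl ⟨hp, hq⟩)).elim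
              · by_cases hq : q = x
                · exact (hqp (Or.inl ⟨hq, hp⟩)).elim
                · rcases trichotomous_of lt' ⟨p, hp⟩ ⟨q, hq⟩ with h1 | h1 | h1
                  · exact (hpq (Or.inr ⟨hp, hq, h1⟩)).elim
                  · exact congrArg Subtype.val h1
                  · exact (hqp (Or.inr ⟨hq, hp, h1⟩)).elim
            irrefl := fun p hp => by
              rcases hp with ⟨h1, h2⟩ | ⟨hp', hq', h1⟩
              · exact h2 h1
              · exact irrefl_of lt' _ h1
            trans := fun p q r h1 h2 => by
              rcases h1 with ⟨hp, hq⟩ | ⟨hp, hq, h1⟩ <;>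
                rcases h2 with ⟨hq2, hr⟩ | ⟨hq2, hr, h2⟩
              · exact absurd hq2 hq
              · exact Or.inl ⟨hp, hr⟩
              · exact absurd hq2 hq
              · exact Or.inr ⟨hp, hr, trans_of lt' h1 h2⟩ }
      · intro v hvm z
        by_cases hz : z = x
        · subst hz
          rcases hx v hvm with H | H
          · refine Or.inl fun y hy => ?_
            rcases hy with ⟨-, hy2⟩ | ⟨hp, -, -⟩
            · exact H y hy2
            · exact absurd rfl hp
          · refine Or.inr fun y hy => ?_
            rcases hy with ⟨-, hy2⟩ | ⟨hp, -, -⟩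
            · exact H y hy2
            · exact absurd rfl hp
        · have hres : res v ∈ P' := List.mem_map_of_mem (f := res) hvm
          rcases hprop' (res v) hres ⟨z, hz⟩ with H | H
          · refine Or.inl fun y hy => ?_
            rcases hy with ⟨h1, -⟩ | ⟨hp', hq, hlt⟩
            · exact absurd h1 hz
            · exact H ⟨y, hq⟩ hlt
          · refine Or.inr fun y hy => ?_
            rcases hy with ⟨h1, -⟩ | ⟨hp', hq, hlt⟩
            · exact absurd h1 hz
            · exact H ⟨y, hq⟩ hlt

end Build

/-- A profile over a finite candidate set is caterpillar group-separable if and only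
if it is medium-restricted (contains no 2-minor) and contains none of the forbidden
2×4 minors. -/
theorem catGS_iff_no_forbidden_minors
    {C : Type*} [Fintype C]
    (P : List (C → C → Prop))
    (hvotes : ∀ v ∈ P, IsStrictTotalOrder C v) :
    CatGS P ↔ ¬ Has2Minor P ∧ ¬ HasCat24Minor P := by
  constructor
  · rintro ⟨lt, hsto, hprop⟩
    haveI := hsto
    have asym : ∀ {p q : C}, lt p q → lt q p → False :=
      fun h1 h2 => irrefl_of lt _ (trans_of lt h1 h2)
    have step : ∀ v ∈ P, ∀ x y z : C, v y x → v x z → lt y x ∨ lt z x := by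
      intro v hvm x y z hyx hxz
      haveI := hvotes v hvm
      rcases hprop v hvm x with H | H
      · refine Or.inl ?_
        rcases trichotomous_of lt y x with h | h | h
        · exact h
        · exact absurd (h ▸ hyx) (irrefl_of v x)
        · exact absurd (trans_of v hyx (H y h)) (irrefl_of v y)
      · refine Or.inr ?_
        rcases trichotomous_of lt z x with h | h | h
        · exact h
        · exact absurd (h ▸ hxz) (irrefl_of v x)
        · exact absurd (trans_of v (H z h) hxz) (irrefl_of v z)
    constructor
    · rintro ⟨u, hu, v, hv, w, hw, a, b, c, hab, hac, hbc, m1, m2, m3⟩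
      have hA : lt b a ∨ lt c a := by
        rcases m1 with ⟨h1, h2⟩ | ⟨h1, h2⟩
        · exact step u hu a b c h1 h2
        · exact (step u hu a c b h1 h2).symm
      have hB : lt a b ∨ lt c b := by
        rcases m2 with ⟨h1, h2⟩ | ⟨h1, h2⟩
        · exact step v hv b a c h1 h2
        · exact (step v hv b c a h1 h2).symm
      have hC : lt a c ∨ lt b c := by
        rcases m3 with ⟨h1, h2⟩ | ⟨h1, h2⟩
        · exact step w hw c a b h1 h2
        · exact (step w hw c b a h1 h2).symm
      rcases hA with h1 | h1 <;> rcases hB with h2 | h2 <;> rcases hC with h3 | h3 <;>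
        first
          | exact asym h1 h2
          | exact asym h1 h3
          | exact asym h2 h3
          | exact asym h3 h2
          | exact irrefl_of lt _ (trans_of lt (trans_of lt h3 h2) h1)
          | exact irrefl_of lt _ (trans_of lt (trans_of lt h2 h3) h1)
    · rintro ⟨u, hu, v, hv, a, b, c, d, hab, hac, had, hbc, hbd, hcd,
        ⟨u1, u2, u3, u4, u5⟩, ⟨v1, v2, v3, v4, v5⟩⟩
      have h1 : lt a b ∨ lt d b := step u hu b a d u1 u4
      have h2' : lt a c ∨ lt d c := step u hu c a d u2 u5
      have h3 : lt b a ∨ lt c a := step v hv a b c v1 v4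
      have h4 : lt b d ∨ lt c d := step v hv d b c v3 v5
      rcases h1 with h1 | h1 <;> rcases h2' with h2' | h2' <;> rcases h3 with h3 | h3 <;>
        rcases h4 with h4 | h4 <;>
        first
          | exact asym h1 h3
          | exact asym h2' h3
          | exact asym h2' h4
          | exact asym h1 h4
          | exact irrefl_of lt _ (trans_of lt (trans_of lt (trans_of lt h1 h4) h2') h3)
          | exact irrefl_of lt _ (trans_of lt (trans_of lt (trans_of lt h4 h1) h3) h2')
  · rintro ⟨h2, h24⟩
    exact catGS_of_le (Fintype.card C) C le_rfl P hvotes h2 h24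
end

section
/- Let P be a preference profile over a finite candidate set C with |C| ≥ 3. If no candidate of C is polarizing for every vote of P, then P contains a 2-minor, or P contains two votes u, v and four distinct candidates a, b, c, d such that, in the restrictions to {a,b,c,d}, u ranks a first and d last while v ranks b first and c last. -/
/-- The candidate `x` is polarizing for the vote `v`: it is ranked first or last. -/
def Polarizing {C : Type*} (v : C → C → Prop) (x : C) : Prop :=
  (∀ y : C, y ≠ x → v x y) ∨ (∀ y : C, y ≠ x → v y x)

private lemma exists_topbot {C : Type*} [Fintype C] (hC : 3 ≤ Fintype.card C)
    (v : C → C → Prop) (hv : IsStrictTotalOrder C v) :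
    ∃ t b : C, t ≠ b ∧ (∀ y, y ≠ t → v t y) ∧ (∀ y, y ≠ b → v y b) := by
  classical
  haveI := hv
  letI : LinearOrder C := linearOrderOfSTO v
  have hne : (Finset.univ : Finset C).Nonempty := by
    rw [Finset.univ_nonempty_iff]
    exact Fintype.card_pos_iff.mp (by omega)
  refine ⟨Finset.univ.min' hne, Finset.univ.max' hne, ?_, ?_, ?_⟩
  · intro hEq
    have h2 : ∀ x : C, x = Finset.univ.min' hne := by
      intro x
      have h1 : Finset.univ.min' hne ≤ x := Finset.min'_le _ x (Finset.mem_univ x)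
      have h2 : x ≤ Finset.univ.max' hne := Finset.le_max' _ x (Finset.mem_univ x)
      rw [← hEq] at h2
      exact le_antisymm h2 h1
    have : Fintype.card C ≤ 1 := Fintype.card_le_one_iff.mpr (fun a b => (h2 a).trans (h2 b).symm)
    omega
  · intro y hy
    have h1 : Finset.univ.min' hne ≤ y := Finset.min'_le _ y (Finset.mem_univ y)
    exact lt_of_le_of_ne h1 (Ne.symm hy)
  · intro y hy
    have h1 : y ≤ Finset.univ.max' hne := Finset.le_max' _ y (Finset.mem_univ y)
    exact lt_of_le_of_ne h1 hy

private lemma cat24_of_poles {C : Type*} {P : List (C → C → Prop)} {u v : C → C → Prop}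
    (hu : u ∈ P) (hv : v ∈ P) {a d b c : C}
    (hut : ∀ y, y ≠ a → u a y) (hub : ∀ y, y ≠ d → u y d)
    (hvt : ∀ y, y ≠ b → v b y) (hvb : ∀ y, y ≠ c → v y c)
    (hab : a ≠ b) (hac : a ≠ c) (had : a ≠ d) (hbc : b ≠ c) (hbd : b ≠ d) (hcd : c ≠ d) :
    HasCat24Minor P :=
  ⟨u, hu, v, hv, a, b, c, d, hab, hac, had, hbc, hbd, hcd,
    ⟨hut b hab.symm, hut c hac.symm, hut d had.symm, hub b hbd, hub c hcd⟩,
    ⟨hvt a hab, hvt c hbc.symm, hvt d hbd.symm, hvb a hac, hvb d hcd.symm⟩⟩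

/-- If no candidate of a finite candidate set `C` with `|C| ≥ 3` is polarizing for
every vote of the profile `P`, then `P` contains a 2-minor or one of the forbidden
2×4 minors (two votes `u, v` and four distinct candidates `a, b, c, d` with `u`
ranking `a` first and `d` last, and `v` ranking `b` first and `c` last, in the
restrictions to `{a, b, c, d}`). -/
theorem no_common_polarizing_candidate_imp_minor
    {C : Type*} [Fintype C] (hC : 3 ≤ Fintype.card C)
    (P : List (C → C → Prop))
    (hvotes : ∀ v ∈ P, IsStrictTotalOrder C v)
    (h : ¬ ∃ a : C, ∀ v ∈ P, Polarizing v a) :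
    Has2Minor P ∨ HasCat24Minor P := by
  classical
  push_neg at h
  have hCne : Nonempty C := Fintype.card_pos_iff.mp (by omega)
  obtain ⟨a0⟩ := hCne
  obtain ⟨u0, hu0P, _⟩ := h a0
  obtain ⟨x, y, hxy, hx, hy⟩ := exists_topbot hC u0 (hvotes u0 hu0P)
  obtain ⟨v1, hv1P, hpol1⟩ := h x
  obtain ⟨t1, b1, ht1b1, ht1, hb1⟩ := exists_topbot hC v1 (hvotes v1 hv1P)
  have hxt1 : x ≠ t1 := by rintro rfl; exact hpol1 (Or.inl ht1)
  have hxb1 : x ≠ b1 := by rintro rfl; exact hpol1 (Or.inr hb1)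
  obtain ⟨v2, hv2P, hpol2⟩ := h y
  obtain ⟨t2, b2, ht2b2, ht2, hb2⟩ := exists_topbot hC v2 (hvotes v2 hv2P)
  have hyt2 : y ≠ t2 := by rintro rfl; exact hpol2 (Or.inl ht2)
  have hyb2 : y ≠ b2 := by rintro rfl; exact hpol2 (Or.inr hb2)
  by_cases hy1 : y ≠ t1 ∧ y ≠ b1
  · exact Or.inr (cat24_of_poles hu0P hv1P hx hy ht1 hb1
      hxt1 hxb1 hxy ht1b1 hy1.1.symm hy1.2.symm)
  by_cases hx2 : x ≠ t2 ∧ x ≠ b2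
  · exact Or.inr (cat24_of_poles hu0P hv2P hx hy ht2 hb2
      hx2.1 hx2.2 hxy ht2b2 hyt2.symm hyb2.symm)
  -- y is a pole of v1; record the other pole z
  have hz : ∃ z, z ≠ x ∧ z ≠ y ∧ ((t1 = y ∧ b1 = z) ∨ (t1 = z ∧ b1 = y)) := by
    rcases not_and_or.mp hy1 with h1 | h1
    · have hyt1 : y = t1 := not_not.mp h1
      subst hyt1
      exact ⟨b1, Ne.symm hxb1, Ne.symm ht1b1, Or.inl ⟨rfl, rfl⟩⟩
    · have hyb1 : y = b1 := not_not.mp h1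
      subst hyb1
      exact ⟨t1, Ne.symm hxt1, ht1b1, Or.inr ⟨rfl, rfl⟩⟩
  obtain ⟨z, hzx, hzy, hzp⟩ := hz
  -- x is a pole of v2; record the other pole w
  have hw : ∃ w, w ≠ x ∧ w ≠ y ∧ ((t2 = x ∧ b2 = w) ∨ (t2 = w ∧ b2 = x)) := by
    rcases not_and_or.mp hx2 with h1 | h1
    · have hxt2 : x = t2 := not_not.mp h1
      subst hxt2
      exact ⟨b2, Ne.symm ht2b2, Ne.symm hyb2, Or.inl ⟨rfl, rfl⟩⟩
    · have hxb2 : x = b2 := not_not.mp h1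
      subst hxb2
      exact ⟨t2, ht2b2, Ne.symm hyt2, Or.inr ⟨rfl, rfl⟩⟩
  obtain ⟨w, hwx, hwy, hwp⟩ := hw
  by_cases hzw : z = w
  · -- 2-minor on x, y, z using v1, v2, u0
    subst hzw
    left
    refine ⟨v1, hv1P, v2, hv2P, u0, hu0P, x, y, z, hxy, Ne.symm hzx, Ne.symm hzy,
      ?_, ?_, Or.inl ⟨hx z hzx, hy z hzy⟩⟩
    · rcases hzp with ⟨rfl, rfl⟩ | ⟨rfl, rfl⟩
      · exact Or.inl ⟨ht1 x hxt1, hb1 x hxb1⟩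
      · exact Or.inr ⟨ht1 x hxt1, hb1 x hxb1⟩
    · rcases hwp with ⟨rfl, rfl⟩ | ⟨rfl, rfl⟩
      · exact Or.inl ⟨ht2 y hyt2, hb2 y hyb2⟩
      · exact Or.inr ⟨ht2 y hyt2, hb2 y hyb2⟩
  · -- poles {y,z} and {x,w} are disjoint: Cat24 from v1 and v2
    right
    rcases hzp with ⟨rfl, rfl⟩ | ⟨rfl, rfl⟩ <;> rcases hwp with ⟨rfl, rfl⟩ | ⟨rfl, rfl⟩ <;>
      exact cat24_of_poles hv1P hv2P ht1 hb1 ht2 hb2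
        (by rintro rfl; simp_all) (by rintro rfl; simp_all) (by rintro rfl; simp_all)
        (by rintro rfl; simp_all) (by rintro rfl; simp_all) (by rintro rfl; simp_all)
end

section
/- Let P be a preference profile over a finite candidate set C with |C| ≥ 3. Then P is caterpillar group-separable if and only if there exists a candidate a ∈ C that is polarizing for every vote of P and the profile obtained by restricting every vote of P to C∖{a} is caterpillar group-separable. -/
/-- A profile over a finite candidate set `C` with `|C| ≥ 3` is caterpillar
group-separable if and only if some candidate `a` is polarizing for every vote and
the profile obtained by restricting every vote to `C \ {a}` is caterpillar
group-separable. -/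
theorem catGS_iff_polarizing_and_delete
    {C : Type*} [Fintype C] (hC : 3 ≤ Fintype.card C)
    (P : List (C → C → Prop))
    (hvotes : ∀ v ∈ P, IsStrictTotalOrder C v) :
    CatGS P ↔
      ∃ a : C, (∀ v ∈ P, Polarizing v a) ∧
        CatGS (P.map fun v => fun x y : {c : C // c ≠ a} => v x.val y.val) := by
  constructor
  · rintro ⟨lt, hlt, hprop⟩
    haveI : IsTrans C lt := ⟨hlt.trans⟩
    haveI : IsIrrefl C lt := ⟨hlt.irrefl⟩
    haveI hne : Nonempty C := Fintype.card_pos_iff.mp (by omega)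
    obtain ⟨a, -, ha⟩ := (Finite.wellFounded_of_trans_of_irrefl lt).has_min
      Set.univ Set.univ_nonempty
    have hamin : ∀ y : C, y ≠ a → lt a y := by
      intro y hy
      rcases (by haveI := hlt; exact trichotomous a y : lt a y ∨ a = y ∨ lt y a) with h | h | h
      · exact h
      · exact absurd h.symm hy
      · exact absurd h (ha y (Set.mem_univ y))
    refine ⟨a, ?_, ?_⟩
    · intro v hv
      rcases hprop v hv a with h | h
      · exact Or.inl fun y hy => h y (hamin y hy)
      · exact Or.inr fun y hy => h y (hamin y hy)
    · refine ⟨fun p q => lt p.val q.val, ?_, ?_⟩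
      · exact { trichotomous := fun p q => by
                  refine (fun H => Or.elim H (fun h1 h2 _ => absurd h1 h2)
                    (fun H => Or.elim H (fun h _ _ => h) (fun h3 _ h4 => absurd h3 h4))) ?_
                  rcases (by haveI := hlt; exact trichotomous p.val q.val : lt p.val q.val ∨ p.val = q.val ∨ lt q.val p.val) with h | h | h
                  · exact Or.inl h
                  · exact Or.inr (Or.inl (Subtype.ext h))
                  · exact Or.inr (Or.inr h)
                irrefl := fun p => hlt.irrefl p.val
                trans := fun p q r => hlt.trans p.val q.val r.val }
      · intro v' hv' x
        obtain ⟨v, hv, rfl⟩ := List.mem_map.mp hv'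
        rcases hprop v hv x.val with h | h
        · exact Or.inl fun y hy => h y.val hy
        · exact Or.inr fun y hy => h y.val hy
  · rintro ⟨a, hpol, lt', hlt', hprop⟩
    refine ⟨fun x y => y ≠ a ∧ (x = a ∨ ∃ (hx : x ≠ a) (hy : y ≠ a), lt' ⟨x, hx⟩ ⟨y, hy⟩),
      ?_, ?_⟩
    · refine { trichotomous := fun x y => ?_, irrefl := fun x hx => ?_,
               trans := fun x y z hxy hyz => ?_ }
      · refine (fun H => Or.elim H (fun h1 h2 _ => absurd h1 h2)
          (fun H => Or.elim H (fun h _ _ => h) (fun h3 _ h4 => absurd h3 h4))) ?_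
        by_cases hx : x = a
        · by_cases hy : y = a
          · exact Or.inr (Or.inl (hx.trans hy.symm))
          · exact Or.inl ⟨hy, Or.inl hx⟩
        · by_cases hy : y = a
          · exact Or.inr (Or.inr ⟨hx, Or.inl hy⟩)
          · rcases (by haveI := hlt'; exact trichotomous _ _ : lt' ⟨x, hx⟩ ⟨y, hy⟩ ∨ (⟨x, hx⟩ : {c : C // c ≠ a}) = ⟨y, hy⟩ ∨ lt' ⟨y, hy⟩ ⟨x, hx⟩) with h | h | h
            · exact Or.inl ⟨hy, Or.inr ⟨hx, hy, h⟩⟩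
            · exact Or.inr (Or.inl (congrArg Subtype.val h))
            · exact Or.inr (Or.inr ⟨hx, Or.inr ⟨hy, hx, h⟩⟩)
      · obtain ⟨hxa, h | ⟨h1, h2, h3⟩⟩ := hx
        · exact hxa h
        · exact hlt'.irrefl _ h3
      · obtain ⟨hya, hxy⟩ := hxy
        obtain ⟨hza, hyz⟩ := hyz
        refine ⟨hza, ?_⟩
        rcases hxy with hx | ⟨hx, hy, hxy⟩
        · exact Or.inl hx
        · rcases hyz with hy' | ⟨hy', hz, hyz⟩
          · exact absurd hy' hy
          · exact Or.inr ⟨hx, hza, hlt'.trans _ _ _ hxy hyz⟩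
    · intro v hv x
      by_cases hx : x = a
      · subst hx
        rcases hpol v hv with h | h
        · exact Or.inl fun y hy => h y hy.1
        · exact Or.inr fun y hy => h y hy.1
      · have hv' : (fun p q : {c : C // c ≠ a} => v p.val q.val) ∈
            P.map (fun v => fun p q : {c : C // c ≠ a} => v p.val q.val) :=
          List.mem_map.mpr ⟨v, hv, rfl⟩
        rcases hprop _ hv' ⟨x, hx⟩ with h | h
        · refine Or.inl fun y hy => ?_
          obtain ⟨hya, hc | ⟨hx', hy', hxy⟩⟩ := hy
          · exact absurd hc hx
          · exact h ⟨y, hy'⟩ hxy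
        · refine Or.inr fun y hy => ?_
          obtain ⟨hya, hc | ⟨hx', hy', hxy⟩⟩ := hy
          · exact absurd hc hx
          · exact h ⟨y, hy'⟩ hxy
end

section
/- Let G = (V, E) be a finite simple graph and let k ≥ 1 be an integer. Let G⁺ be the graph obtained from G by adding k pairwise disjoint new cliques H₁,…,H_k, each on k+2 new vertices, adding every edge between a vertex of V and a new vertex, and adding no edges between distinct cliques H_i and H_j. Then the vertex set of G⁺ can be partitioned into k cliques if and only if V can be partitioned into k cliques of G. -/
/-- The graph `G⁺` obtained from `G` by adding `k` pairwise disjoint new cliques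
`H₁, …, H_k`, each on `k + 2` new vertices (vertex `Sum.inr (i, a)` is the `a`-th
vertex of clique `H_i`), adding every edge between an old vertex and a new vertex,
and adding no edges between distinct new cliques. -/
def GPlus {V : Type*} (G : SimpleGraph V) (k : ℕ) :
    SimpleGraph (V ⊕ (Fin k × Fin (k + 2))) where
  Adj x y :=
    match x, y with
    | Sum.inl a, Sum.inl b => G.Adj a b
    | Sum.inl _, Sum.inr _ => True
    | Sum.inr _, Sum.inl _ => True
    | Sum.inr p, Sum.inr q => p.1 = q.1 ∧ p.2 ≠ q.2
  symm := by
    constructor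
    rintro (a | p) (b | q) h
    · exact G.adj_symm h
    · trivial
    · trivial
    · exact ⟨h.1.symm, h.2.symm⟩
  loopless := by
    constructor
    rintro (a | p) h
    · exact G.irrefl h
    · exact h.2 rfl

/-- The vertex set of `G` can be partitioned into `k` (possibly empty) sets, each of
which induces a complete subgraph. -/
def CliquePartition {V : Type*} (G : SimpleGraph V) (k : ℕ) : Prop :=
  ∃ f : V → Fin k, ∀ x y : V, f x = f y → x ≠ y → G.Adj x y

/-- For a finite simple graph `G` and `k ≥ 1`, the graph `G⁺` can be partitioned
into `k` cliques if and only if `G` can be partitioned into `k` cliques. -/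
theorem gplus_cliquePartition_iff
    {V : Type*} [Fintype V] (G : SimpleGraph V) (k : ℕ) (hk : 1 ≤ k) :
    CliquePartition (GPlus G k) k ↔ CliquePartition G k := by
  constructor
  · rintro ⟨g, hg⟩
    refine ⟨fun v => g (Sum.inl v), fun x y h hne => ?_⟩
    exact hg (Sum.inl x) (Sum.inl y) h (fun e => hne (Sum.inl.inj e))
  · rintro ⟨f, hf⟩
    refine ⟨fun x => match x with | Sum.inl v => f v | Sum.inr p => p.1, ?_⟩
    rintro (a | p) (b | q) h hne
    · exact hf a b h (fun e => hne (congrArg Sum.inl e))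
    · trivial
    · trivial
    · exact ⟨h, fun e => hne (by cases p; cases q; simp_all)⟩
end

section
/- Let H = (V', E') be a finite simple graph with vertices enumerated u₁,…,u_n having at least one pair of distinct non-adjacent vertices, and let P(H) = (v₁,…,v_n) be the profile constructed from H. If S ⊆ V' induces a clique in H, then the subprofile (v_i : u_i ∈ S) of P(H) is value-restricted, i.e., it contains no j-minor for any j ∈ {1,2,3}. -/
/-! The construction `P(H)`: the vertex set of the graph `H` is a finite linearly
ordered type `W` (the linear order is the enumeration `u₁, …, u_n` of the vertices).
For each non-adjacent pair `p = (u_i, u_j)` with `u_i < u_j` there is a triple of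
candidates `a^{i,j}, b^{i,j}, c^{i,j}`, encoded as `(p, 0), (p, 1), (p, 2)`. -/

/-- The non-adjacent pairs `(u_i, u_j)` with `i < j` of the graph `H`. -/
abbrev NonEdge {W : Type*} [LinearOrder W] (H : SimpleGraph W) : Type _ :=
  {p : W × W // p.1 < p.2 ∧ ¬ H.Adj p.1 p.2}

/-- The candidate set of the profile `P(H)`: a triple of candidates
`a^{i,j} = (p, 0)`, `b^{i,j} = (p, 1)`, `c^{i,j} = (p, 2)` for each non-edge `p`. -/
abbrev Cand {W : Type*} [LinearOrder W] (H : SimpleGraph W) : Type _ :=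
  NonEdge H × Fin 3

/-- The position (0 = first, 1 = second, 2 = third) that voter `ℓ` assigns to the
candidate `(e, t)` within its triple: voter `u_i` ranks `a ≻ b ≻ c`, voter `u_j`
ranks `b ≻ c ≻ a`, and every other voter ranks `c ≻ a ≻ b`, where `e = (u_i, u_j)`. -/
def localRank {W : Type*} [LinearOrder W] {H : SimpleGraph W}
    (ℓ : W) (e : NonEdge H) (t : Fin 3) : ℕ :=
  if ℓ = e.val.1 then t.val
  else if ℓ = e.val.2 then (t.val + 2) % 3
  else (t.val + 1) % 3

/-- The vote `v_ℓ` of the profile `P(H)`, as the strict linear order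
`voteRel H ℓ x y` meaning "voter `ℓ` ranks candidate `x` above candidate `y`":
triples are ordered lexicographically by their non-edge, and within a triple
candidates are ordered according to `localRank`. -/
def voteRel {W : Type*} [LinearOrder W] (H : SimpleGraph W)
    (ℓ : W) (x y : Cand H) : Prop :=
  (x.1.val.1 < y.1.val.1 ∨ (x.1.val.1 = y.1.val.1 ∧ x.1.val.2 < y.1.val.2)) ∨
  (x.1 = y.1 ∧ localRank ℓ x.1 x.2 < localRank ℓ y.1 y.2)

section Aux
variable {W : Type*} [LinearOrder W] {H : SimpleGraph W}

def key (ℓ : W) (x : Cand H) : W ×ₗ (W ×ₗ ℕ) :=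
  toLex (x.1.val.1, toLex (x.1.val.2, localRank ℓ x.1 x.2))

lemma voteRel_iff_key (ℓ : W) (x y : Cand H) :
    voteRel H ℓ x y ↔ key ℓ x < key ℓ y := by
  unfold voteRel key
  rw [Prod.Lex.lt_iff, Prod.Lex.lt_iff]
  constructor
  · rintro ((h | ⟨h1, h2⟩) | ⟨h1, h2⟩)
    · exact Or.inl h
    · exact Or.inr ⟨h1, Or.inl h2⟩
    · refine Or.inr ⟨congrArg (fun e => e.val.1) h1,
        Or.inr ⟨congrArg (fun e => e.val.2) h1, ?_⟩⟩
      rw [show x.1 = y.1 from h1] at h2 ⊢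
      exact h2
  · rintro (h | ⟨h1, (h2 | ⟨h2, h3⟩)⟩)
    · exact Or.inl (Or.inl h)
    · exact Or.inl (Or.inr ⟨h1, h2⟩)
    · have he : x.1 = y.1 := Subtype.ext (Prod.ext h1 h2)
      refine Or.inr ⟨he, ?_⟩
      rw [he] at h3 ⊢
      exact h3

lemma voteRel_trans (ℓ : W) {x y z : Cand H}
    (h1 : voteRel H ℓ x y) (h2 : voteRel H ℓ y z) : voteRel H ℓ x z :=
  (voteRel_iff_key ℓ x z).mpr
    (lt_trans ((voteRel_iff_key ℓ x y).mp h1) ((voteRel_iff_key ℓ y z).mp h2))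

lemma voteRel_asymm (ℓ : W) {x y : Cand H}
    (h1 : voteRel H ℓ x y) (h2 : voteRel H ℓ y x) : False :=
  lt_asymm ((voteRel_iff_key ℓ x y).mp h1) ((voteRel_iff_key ℓ y x).mp h2)

lemma voteRel_indep (ℓ ℓ' : W) {x y : Cand H} (hne : x.1 ≠ y.1) :
    voteRel H ℓ x y ↔ voteRel H ℓ' x y := by
  simp [voteRel, hne]

lemma voteRel_congr (ℓ ℓ' : W) {x y : Cand H}
    (hx : localRank ℓ x.1 x.2 = localRank ℓ' x.1 x.2)
    (hy : localRank ℓ y.1 y.2 = localRank ℓ' y.1 y.2) :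
    voteRel H ℓ x y ↔ voteRel H ℓ' x y := by
  unfold voteRel
  rw [hx, hy]

lemma localRank_other {ℓ : W} {e : NonEdge H} (h1 : ℓ ≠ e.val.1) (h2 : ℓ ≠ e.val.2)
    (t : Fin 3) : localRank ℓ e t = (t.val + 1) % 3 := by
  simp [localRank, h1, h2]

end Aux


lemma posof_swap23 {C : Type*} {j : ℕ} (hj : j = 1 ∨ j = 2 ∨ j = 3)
    {v : C → C → Prop} {x y z : C} (h : PosOf j v x y z) : PosOf j v x z y := by
  rcases hj with rfl | rfl | rfl <;> simp only [PosOf] at h ⊢ <;> tauto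

lemma posof_sep {C : Type*} {j : ℕ} (hj : j = 1 ∨ j = 2 ∨ j = 3)
    {v v' : C → C → Prop} {x y z : C}
    (htr : ∀ a b c : C, v' a b → v' b c → v' a c)
    (hasym : ∀ a b : C, v' a b → v' b a → False)
    (hxy : v x y ↔ v' x y) (hyx : v y x ↔ v' y x)
    (hxz : v x z ↔ v' x z) (hzx : v z x ↔ v' z x)
    (h1 : PosOf j v x y z) (h2 : PosOf j v' y x z) : False := by
  rcases hj with rfl | rfl | rfl <;> simp only [PosOf] at h1 h2
  · exact hasym _ _ (hxy.mp h1.1) h2.1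
  · rcases h1 with ⟨ha, hb⟩ | ⟨ha, hb⟩ <;> rcases h2 with ⟨hc, hd⟩ | ⟨hc, hd⟩
    · exact hasym _ _ hc (hyx.mp ha)
    · exact hasym _ _ (htr _ _ _ (hxz.mp hb) hc) hd
    · exact hasym _ _ (htr _ _ _ hc hd) (hzx.mp ha)
    · exact hasym _ _ (hxy.mp hb) hd
  · exact hasym _ _ h2.1 (hyx.mp h1.1)


/-- The subprofile of the profile `(vote p)_{p}` given by the index set `S`
contains an `i`-minor: there are three distinct votes of the subprofile and three
distinct candidates such that each candidate is ranked in the `i`-th position (in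
the restriction to the triple) by exactly one of the three votes. -/
def HasIMinorOn {ι C : Type*} (i : ℕ) (vote : ι → C → C → Prop) (S : Set ι) : Prop :=
  ∃ p ∈ S, ∃ q ∈ S, ∃ r ∈ S, p ≠ q ∧ p ≠ r ∧ q ≠ r ∧
    ∃ a b c : C, a ≠ b ∧ a ≠ c ∧ b ≠ c ∧
      PosOf i (vote p) a b c ∧ PosOf i (vote q) b a c ∧ PosOf i (vote r) c a b

/-- If `S` induces a clique in `H`, then the subprofile `(v_i : u_i ∈ S)` of `P(H)`
is value-restricted: it contains no `j`-minor for any `j ∈ {1,2,3}`. -/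
theorem clique_subprofile_value_restricted
    {W : Type*} [LinearOrder W] [Fintype W] (H : SimpleGraph W)
    (hne : ∃ x y : W, x ≠ y ∧ ¬ H.Adj x y)
    (S : Set W) (hclique : ∀ x ∈ S, ∀ y ∈ S, x ≠ y → H.Adj x y) :
    ∀ j : ℕ, j = 1 ∨ j = 2 ∨ j = 3 → ¬ HasIMinorOn j (voteRel H) S := by
  intro j hj hmin
  obtain ⟨p, hp, q, hq, r, hr, hpq, hpr, hqr, a, b, c, hab, hac, hbc, Hp, Hq, Hr⟩ := hmin
  have htr : ∀ ℓ : W, ∀ x y z : Cand H, voteRel H ℓ x y → voteRel H ℓ y z → voteRel H ℓ x z :=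
    fun ℓ x y z => voteRel_trans ℓ
  have hasym : ∀ ℓ : W, ∀ x y : Cand H, voteRel H ℓ x y → voteRel H ℓ y x → False :=
    fun ℓ x y => voteRel_asymm ℓ
  by_cases hA : a.1 = b.1
  · by_cases hB : a.1 = c.1
    · -- all in the same triple e
      set e : NonEdge H := a.1 with he
      -- at least two of p, q, r are non-endpoints of e
      have key2 : ∀ x ∈ S, ∀ y ∈ S, x ≠ y →
          (x ≠ e.val.1 ∧ x ≠ e.val.2) ∨ (y ≠ e.val.1 ∧ y ≠ e.val.2) := by
        intro x hx y hy hxy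
        by_contra hcon
        push_neg at hcon
        obtain ⟨h1, h2⟩ := hcon
        have hx' : x = e.val.1 ∨ x = e.val.2 := by tauto
        have hy' : y = e.val.1 ∨ y = e.val.2 := by tauto
        have hadj := hclique x hx y hy hxy
        rcases hx' with rfl | rfl <;> rcases hy' with rfl | rfl
        · exact hxy rfl
        · exact e.prop.2 hadj
        · exact e.prop.2 hadj.symm
        · exact hxy rfl
      -- congruence of votes of two non-endpoints on the triple
      have hcong : ∀ ℓ ℓ' : W, (ℓ ≠ e.val.1 ∧ ℓ ≠ e.val.2) → (ℓ' ≠ e.val.1 ∧ ℓ' ≠ e.val.2) →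
          ∀ x y : Cand H, x.1 = e → y.1 = e → (voteRel H ℓ x y ↔ voteRel H ℓ' x y) := by
        intro ℓ ℓ' hℓ hℓ' x y hx hy
        refine voteRel_congr ℓ ℓ' ?_ ?_
        · rw [hx, localRank_other hℓ.1 hℓ.2, localRank_other hℓ'.1 hℓ'.2]
        · rw [hy, localRank_other hℓ.1 hℓ.2, localRank_other hℓ'.1 hℓ'.2]
      have hae : a.1 = e := rfl
      have hbe : b.1 = e := hA.symm
      have hce : c.1 = e := hB.symm
      rcases key2 p hp q hq hpq with hP | hQ
      · rcases key2 q hq r hr hqr with hQ | hR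
        · -- p and q non-endpoints: use Hp, Hq
          exact posof_sep hj (htr q) (hasym q)
            (hcong p q hP hQ a b hae hbe) (hcong p q hP hQ b a hbe hae)
            (hcong p q hP hQ a c hae hce) (hcong p q hP hQ c a hce hae) Hp Hq
        · -- p and r non-endpoints: x=a, y=c, z=b
          exact posof_sep hj (htr r) (hasym r)
            (hcong p r hP hR a c hae hce) (hcong p r hP hR c a hce hae)
            (hcong p r hP hR a b hae hbe) (hcong p r hP hR b a hbe hae)
            (posof_swap23 hj Hp) Hr
      · rcases key2 p hp r hr hpr with hP | hR
        · -- p and q non-endpoints again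
          exact posof_sep hj (htr q) (hasym q)
            (hcong p q hP hQ a b hae hbe) (hcong p q hP hQ b a hbe hae)
            (hcong p q hP hQ a c hae hce) (hcong p q hP hQ c a hce hae) Hp Hq
        · -- q and r non-endpoints: x=b, y=c, z=a
          exact posof_sep hj (htr r) (hasym r)
            (hcong q r hQ hR b c hbe hce) (hcong q r hQ hR c b hce hbe)
            (hcong q r hQ hR b a hbe hae) (hcong q r hQ hR a b hae hbe)
            (posof_swap23 hj Hq) (posof_swap23 hj Hr)
    · -- c separated: c.1 ≠ a.1 and c.1 ≠ b.1
      have h1 : c.1 ≠ a.1 := fun h => hB h.symm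
      have h2 : c.1 ≠ b.1 := fun h => hB (hA.trans h.symm)
      exact posof_sep hj (htr p) (hasym p)
        (voteRel_indep r p h1) (voteRel_indep r p h1.symm)
        (voteRel_indep r p h2) (voteRel_indep r p h2.symm)
        Hr (posof_swap23 hj Hp)
  · by_cases hB : a.1 = c.1
    · -- b separated
      have h1 : b.1 ≠ a.1 := fun h => hA h.symm
      have h2 : b.1 ≠ c.1 := fun h => hA (h.trans hB.symm).symm
      exact posof_sep hj (htr p) (hasym p)
        (voteRel_indep q p h1) (voteRel_indep q p h1.symm)
        (voteRel_indep q p h2) (voteRel_indep q p h2.symm)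
        Hq Hp
    · -- a separated
      exact posof_sep hj (htr q) (hasym q)
        (voteRel_indep p q hA) (voteRel_indep p q (fun h => hA h.symm))
        (voteRel_indep p q hB) (voteRel_indep p q (fun h => hB h.symm))
        Hp Hq
end

section
/- Let H = (V', E') be a finite simple graph with vertices enumerated u₁,…,u_n having at least one pair of distinct non-adjacent vertices, and let P(H) = (v₁,…,v_n) be the profile constructed from H. If u_r, u_s, u_t are three distinct vertices with {u_r, u_s} ∉ E', then the restriction of the three votes v_r, v_s, v_t to the candidate triple T^{r,s} is a j-minor for every j ∈ {1,2,3}. -/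
/-- If `u_r, u_s, u_t` are three distinct vertices of `H` with `u_r < u_s`
non-adjacent, then the restriction of the votes `v_r, v_s, v_t` of `P(H)` to the
candidate triple `T^{r,s}` is a `j`-minor for every `j ∈ {1,2,3}`: the triple can be
listed as `x, y, z` so that `x` is in position `j` in `v_r`, `y` in position `j` in
`v_s`, and `z` in position `j` in `v_t`. -/
theorem nonedge_triple_is_j_minor
    {W : Type*} [LinearOrder W] [Fintype W] (H : SimpleGraph W)
    (r s t : W) (hrs : r < s) (hAdj : ¬ H.Adj r s) (htr : t ≠ r) (hts : t ≠ s) :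
    ∀ j : ℕ, j = 1 ∨ j = 2 ∨ j = 3 →
      ∃ x y z : Cand H,
        ({x, y, z} : Set (Cand H)) =
          {(⟨(r, s), hrs, hAdj⟩, (0 : Fin 3)), (⟨(r, s), hrs, hAdj⟩, (1 : Fin 3)),
            (⟨(r, s), hrs, hAdj⟩, (2 : Fin 3))} ∧
        PosOf j (voteRel H r) x y z ∧ PosOf j (voteRel H s) y x z ∧
        PosOf j (voteRel H t) z x y := by

  intro j hj
  set e : NonEdge H := ⟨(r, s), hrs, hAdj⟩ with he
  have key : ∀ (ℓ : W) (t1 t2 : Fin 3),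
      localRank ℓ e t1 < localRank ℓ e t2 → voteRel H ℓ (e, t1) (e, t2) :=
    fun ℓ t1 t2 h => Or.inr ⟨rfl, h⟩
  have hr : ∀ u : Fin 3, localRank r e u = u.val := by
    intro u; simp [localRank, he]
  have hs : ∀ u : Fin 3, localRank s e u = (u.val + 2) % 3 := by
    intro u; simp [localRank, he, hrs.ne']
  have ht : ∀ u : Fin 3, localRank t e u = (u.val + 1) % 3 := by
    intro u; simp [localRank, he, htr, hts]
  rcases hj with rfl | rfl | rfl
  · refine ⟨(e, 0), (e, 1), (e, 2), rfl, ?_, ?_, ?_⟩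
    · exact ⟨key r 0 1 (by simp [hr]), key r 0 2 (by simp [hr])⟩
    · exact ⟨key s 1 0 (by simp [hs]), key s 1 2 (by simp [hs])⟩
    · exact ⟨key t 2 0 (by simp [ht]), key t 2 1 (by simp [ht])⟩
  · refine ⟨(e, 1), (e, 2), (e, 0), ?_, ?_, ?_, ?_⟩
    · ext u; simp only [Set.mem_insert_iff, Set.mem_singleton_iff]; tauto
    · exact Or.inr ⟨key r 0 1 (by simp [hr]), key r 1 2 (by simp [hr])⟩
    · exact Or.inl ⟨key s 1 2 (by simp [hs]), key s 2 0 (by simp [hs])⟩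
    · exact Or.inr ⟨key t 2 0 (by simp [ht]), key t 0 1 (by simp [ht])⟩
  · refine ⟨(e, 2), (e, 0), (e, 1), ?_, ?_, ?_, ?_⟩
    · ext u; simp only [Set.mem_insert_iff, Set.mem_singleton_iff]; tauto
    · exact ⟨key r 0 2 (by simp [hr]), key r 1 2 (by simp [hr])⟩
    · exact ⟨key s 2 0 (by simp [hs]), key s 1 0 (by simp [hs])⟩
    · exact ⟨key t 2 1 (by simp [ht]), key t 0 1 (by simp [ht])⟩
end

section
/- Let H = (V', E') be a finite simple graph with vertices enumerated u₁,…,u_n having at least one pair of distinct non-adjacent vertices, and let P(H) be the profile constructed from H. Then there do not exist two votes u, v of P(H) and four distinct candidates a, b, c, d such that u ranks them a ≻ b ≻ c ≻ d and v ranks them b ≻ d ≻ a ≻ c (in the restrictions to {a,b,c,d}); that is, P(H) contains no 2×4 minor of the form a ≻_u b ≻_u c ≻_u d, b ≻_v d ≻_v a ≻_v c. -/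
/-- The profile `P(H)` contains no 2×4 minor of the form
`a ≻_u b ≻_u c ≻_u d`, `b ≻_v d ≻_v a ≻_v c`: there are no two votes
`u = v_p, v = v_q` (for distinct voters `p ≠ q`) and four distinct candidates
`a, b, c, d` such that, in the restrictions to `{a, b, c, d}`, `u` ranks them
`a ≻ b ≻ c ≻ d` and `v` ranks them `b ≻ d ≻ a ≻ c`. -/
theorem no_gs_24_minor
    {W : Type*} [LinearOrder W] [Fintype W] (H : SimpleGraph W)
    (hne : ∃ x y : W, x ≠ y ∧ ¬ H.Adj x y) :
    ¬ ∃ p q : W, p ≠ q ∧ ∃ a b c d : Cand H,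
        a ≠ b ∧ a ≠ c ∧ a ≠ d ∧ b ≠ c ∧ b ≠ d ∧ c ≠ d ∧
        (voteRel H p a b ∧ voteRel H p a c ∧ voteRel H p a d ∧
         voteRel H p b c ∧ voteRel H p b d ∧ voteRel H p c d) ∧
        (voteRel H q b d ∧ voteRel H q b a ∧ voteRel H q b c ∧
         voteRel H q d a ∧ voteRel H q d c ∧ voteRel H q a c) := by
  rintro ⟨p, q, hpq, a, b, c, d, hab, hac, had, hbc, hbd, hcd,
    ⟨pab, pac, pad, pbc, pbd, pcd⟩, ⟨qbd, qba, qbc, qda, qdc, qac⟩⟩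
  have key : ∀ x y : Cand H, voteRel H p x y → voteRel H q y x → x.1 = y.1 := by
    rintro x y (hx | ⟨hx, _⟩) (hy | ⟨hy, _⟩)
    · exfalso
      rcases hx with h1 | ⟨h1, h2⟩ <;> rcases hy with h3 | ⟨h3, h4⟩
      · exact absurd h3 (lt_asymm h1)
      · exact absurd (h3 ▸ h1) (lt_irrefl _)
      · exact absurd (h1 ▸ h3) (lt_irrefl _)
      · exact absurd h4 (lt_asymm h2)
    · exact hy.symm
    · exact hx
    · exact hx
  have e1 : a.1 = b.1 := key a b pab qba
  have e2 : a.1 = d.1 := key a d pad qda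
  have e3 : c.1 = d.1 := key c d pcd qdc
  have f1 : a.2 ≠ b.2 := fun h => hab (Prod.ext e1 h)
  have f2 : a.2 ≠ c.2 := fun h => hac (Prod.ext (e2.trans e3.symm) h)
  have f3 : a.2 ≠ d.2 := fun h => had (Prod.ext e2 h)
  have f4 : b.2 ≠ c.2 := fun h => hbc (Prod.ext (e1.symm.trans (e2.trans e3.symm)) h)
  have f5 : b.2 ≠ d.2 := fun h => hbd (Prod.ext (e1.symm.trans e2) h)
  have f6 : c.2 ≠ d.2 := fun h => hcd (Prod.ext e3 h)
  have g1 := Fin.val_ne_of_ne f1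
  have g2 := Fin.val_ne_of_ne f2
  have g3 := Fin.val_ne_of_ne f3
  have g4 := Fin.val_ne_of_ne f4
  have g5 := Fin.val_ne_of_ne f5
  have g6 := Fin.val_ne_of_ne f6
  have := a.2.isLt; have := b.2.isLt; have := c.2.isLt; have := d.2.isLt
  omega
end
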